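/- Let F be the formal power series over ℚ whose coefficient of q^n is (n+1)·σ₁(n+1), i.e., F = Σ_{k≥1} k·σ₁(k)·q^{k−1}. Then for every natural number g ≥ 1, the Bryan–Leung count N_{g,7} := g · (coefficient of q^7 in F^{g−1}) satisfies N_{g,7} = (24/35)·g(g−1)(81g⁶ − 1053g⁵ + 7200g⁴ − 29970g³ + 75814g² − 106347g + 62685). -/

import Mathlib

/-- The Bryan–Leung power series `F = Σ_{k≥1} k·σ₁(k)·q^{k−1}` over `ℚ`,
whose coefficient of `q^n` is `(n+1)·σ₁(n+1)`. -/
noncomputable def FBL : PowerSeries ℚ :=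
  PowerSeries.mk fun n => (((n + 1) * ArithmeticFunction.sigma 1 (n + 1) : ℕ) : ℚ)

lemma coeffF (n : ℕ) : PowerSeries.coeff (R := ℚ) n FBL = (((n + 1) * ArithmeticFunction.sigma 1 (n + 1) : ℕ) : ℚ) := by
  simp [FBL]

lemma key : ∀ m : ℕ,
    PowerSeries.coeff (R := ℚ) 0 (FBL ^ m) = 1 ∧
    PowerSeries.coeff (R := ℚ) 1 (FBL ^ m) = 6 * (m:ℚ) ∧
    PowerSeries.coeff (R := ℚ) 2 (FBL ^ m) = -6 * (m:ℚ) + 18 * (m:ℚ)^2 ∧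
    PowerSeries.coeff (R := ℚ) 3 (FBL ^ m) = 28 * (m:ℚ) - 36 * (m:ℚ)^2 + 36 * (m:ℚ)^3 ∧
    PowerSeries.coeff (R := ℚ) 4 (FBL ^ m) = -102 * (m:ℚ) + 186 * (m:ℚ)^2 - 108 * (m:ℚ)^3 + 54 * (m:ℚ)^4 ∧
    PowerSeries.coeff (R := ℚ) 5 (FBL ^ m) = (1956/5) * (m:ℚ) - 780 * (m:ℚ)^2 + 612 * (m:ℚ)^3 - 216 * (m:ℚ)^4 + (324/5) * (m:ℚ)^5 ∧
    PowerSeries.coeff (R := ℚ) 6 (FBL ^ m) = -1488 * (m:ℚ) + (16756/5) * (m:ℚ)^2 - 2880 * (m:ℚ)^3 + 1332 * (m:ℚ)^4 - 324 * (m:ℚ)^5 + (324/5) * (m:ℚ)^6 ∧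
    PowerSeries.coeff (R := ℚ) 7 (FBL ^ m) = (40368/7) * (m:ℚ) - (70656/5) * (m:ℚ)^2 + (67848/5) * (m:ℚ)^3 - 6912 * (m:ℚ)^4 + 2160 * (m:ℚ)^5 - (1944/5) * (m:ℚ)^6 + (1944/35) * (m:ℚ)^7 := by
  intro m
  induction m with
  | zero => norm_num
  | succ m ih =>
    obtain ⟨h0, h1, h2, h3, h4, h5, h6, h7⟩ := ih
    have hs1 : ArithmeticFunction.sigma 1 1 = 1 := by decide
    have hs2 : ArithmeticFunction.sigma 1 2 = 3 := by decide
    have hs3 : ArithmeticFunction.sigma 1 3 = 4 := by decide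
    have hs4 : ArithmeticFunction.sigma 1 4 = 7 := by decide
    have hs5 : ArithmeticFunction.sigma 1 5 = 6 := by decide
    have hs6 : ArithmeticFunction.sigma 1 6 = 12 := by decide
    have hs7 : ArithmeticFunction.sigma 1 7 = 8 := by decide
    have hs8 : ArithmeticFunction.sigma 1 8 = 15 := by decide
    have hF0 : PowerSeries.coeff (R := ℚ) 0 FBL = 1 := by rw [coeffF]; norm_num [hs1]
    have hF1 : PowerSeries.coeff (R := ℚ) 1 FBL = 6 := by rw [coeffF]; norm_num [hs2]
    have hF2 : PowerSeries.coeff (R := ℚ) 2 FBL = 12 := by rw [coeffF]; norm_num [hs3]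
    have hF3 : PowerSeries.coeff (R := ℚ) 3 FBL = 28 := by rw [coeffF]; norm_num [hs4]
    have hF4 : PowerSeries.coeff (R := ℚ) 4 FBL = 30 := by rw [coeffF]; norm_num [hs5]
    have hF5 : PowerSeries.coeff (R := ℚ) 5 FBL = 72 := by rw [coeffF]; norm_num [hs6]
    have hF6 : PowerSeries.coeff (R := ℚ) 6 FBL = 56 := by rw [coeffF]; norm_num [hs7]
    have hF7 : PowerSeries.coeff (R := ℚ) 7 FBL = 120 := by rw [coeffF]; norm_num [hs8]
    have hpow : FBL ^ (m + 1) = FBL ^ m * FBL := pow_succ FBL m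
    refine ⟨?_, ?_, ?_, ?_, ?_, ?_, ?_, ?_⟩ <;>
    · rw [hpow, PowerSeries.coeff_mul, Finset.Nat.sum_antidiagonal_eq_sum_range_succ_mk]
      simp only [Finset.sum_range_succ, Finset.sum_range_zero]
      simp only [h0, h1, h2, h3, h4, h5, h6, h7, hF0, hF1, hF2, hF3, hF4, hF5, hF6, hF7]
      push_cast
      ring

/-- The Bryan–Leung count `N_{g,7} := g · (coefficient of q^7 in F^{g−1})`
is given by the node polynomial of Table (5.1). -/
theorem N_g_7 (g : ℕ) (hg : 1 ≤ g) :
    (g : ℚ) * (PowerSeries.coeff (R := ℚ) 7) (FBL ^ (g - 1)) =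
      (24 / 35 : ℚ) * (g : ℚ) * ((g : ℚ) - 1) * (81 * (g : ℚ) ^ 6 - 1053 * (g : ℚ) ^ 5 + 7200 * (g : ℚ) ^ 4 - 29970 * (g : ℚ) ^ 3 + 75814 * (g : ℚ) ^ 2 - 106347 * (g : ℚ) + 62685) := by
  obtain ⟨m, rfl⟩ : ∃ m, g = m + 1 := ⟨g - 1, (Nat.succ_pred_eq_of_pos hg).symm⟩
  have h7 := (key m).2.2.2.2.2.2.2
  simp only [Nat.add_sub_cancel, h7]
  push_cast
  ring
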